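/- Let {X_n} be an expander with conductance c > 0 and degree d. Then the sequence {X_n} admits no uniform embedding into ℓ²: there do not exist functions ρ₁, ρ₂ : ℝ₊ → ℝ₊ with ρ₁(t) → ∞ as t → ∞ and a sequence of maps f_n : X_n → ℓ² such that ρ₁(d(x,y)) ≤ ‖f_n(x) − f_n(y)‖ ≤ ρ₂(d(x,y)) for all n and all vertices x, y of X_n. -/

import Mathlib

open Finset

variable {V : Type} [Fintype V] [DecidableEq V]

private def adjP (G : SimpleGraph V) [DecidableRel G.Adj] : Finset (V × V) :=
  Finset.univ.filter (fun p => G.Adj p.1 p.2)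

private lemma sum_fst (G : SimpleGraph V) [DecidableRel G.Adj] (F : V → ℝ) :
    ∑ p ∈ adjP G, F p.1 = ∑ x, (G.degree x : ℝ) * F x := by
  rw [adjP, Finset.sum_filter, ← Finset.univ_product_univ, Finset.sum_product]
  refine Finset.sum_congr rfl fun x _ => ?_
  show ∑ a ∈ Finset.univ, (if G.Adj x a then F x else 0) = _
  rw [← Finset.sum_filter, Finset.sum_const, ← SimpleGraph.neighborFinset_eq_filter,
    ← SimpleGraph.degree, nsmul_eq_mul]

private lemma sum_snd (G : SimpleGraph V) [DecidableRel G.Adj] (F : V → ℝ) :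
    ∑ p ∈ adjP G, F p.2 = ∑ x, (G.degree x : ℝ) * F x := by
  rw [adjP, Finset.sum_filter, ← Finset.univ_product_univ, Finset.sum_product]
  rw [Finset.sum_comm]
  refine Finset.sum_congr rfl fun x _ => ?_
  show ∑ a ∈ Finset.univ, (if G.Adj a x then F x else 0) = _
  simp_rw [G.adj_comm]
  rw [← Finset.sum_filter, Finset.sum_const, ← SimpleGraph.neighborFinset_eq_filter,
    ← SimpleGraph.degree, nsmul_eq_mul]

set_option linter.unusedSectionVars false

private lemma coarea (G : SimpleGraph V) [DecidableRel G.Adj]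
    {c : ℝ} (hc : 0 < c)
    (hexp : ∀ A : Finset V, 2 * A.card ≤ Fintype.card V →
      c * A.card ≤ ({x : V | x ∉ A ∧ ∃ a ∈ A, G.Adj x a}.ncard : ℝ)) :
    ∀ (n : ℕ) (u : V → ℝ), (Finset.univ.filter (fun x => u x ≠ 0)).card = n →
      (∀ x, 0 ≤ u x) → 2 * (Finset.univ.filter (fun x => u x ≠ 0)).card ≤ Fintype.card V →
      2 * c * ∑ x, u x ≤ ∑ p ∈ adjP G, |u p.1 - u p.2| := by
  intro n
  induction n using Nat.strong_induction_on with
  | _ n ih =>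
    intro u hn hu hsupp
    classical
    set A : Finset V := Finset.univ.filter (fun x => u x ≠ 0) with hA
    have hmemA : ∀ x, x ∈ A ↔ u x ≠ 0 := by intro x; simp [hA]
    have huzero : ∀ x, x ∉ A → u x = 0 := by
      intro x hx; by_contra h; exact hx ((hmemA x).2 h)
    by_cases hAe : A = ∅
    · have hz : ∀ x, u x = 0 := fun x => huzero x (by simp [hAe])
      have h1 : ∑ x, u x = 0 := by simp [hz]
      have h2 : (0:ℝ) ≤ ∑ p ∈ adjP G, |u p.1 - u p.2| :=
        Finset.sum_nonneg fun p _ => abs_nonneg _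
      rw [h1]; linarith
    · have hAne : A.Nonempty := Finset.nonempty_iff_ne_empty.2 hAe
      have himne : (A.image u).Nonempty := hAne.image u
      set t : ℝ := (A.image u).min' himne with ht
      obtain ⟨x₀, hx₀A, hx₀⟩ := Finset.mem_image.1 ((A.image u).min'_mem himne)
      have htle : ∀ x ∈ A, t ≤ u x := fun x hx =>
        Finset.min'_le _ _ (Finset.mem_image_of_mem u hx)
      have hx₀t : u x₀ = t := hx₀.trans ht.symm
      have htpos : 0 < t := by
        rw [← hx₀t]
        exact lt_of_le_of_ne (hu x₀) (Ne.symm ((hmemA x₀).1 hx₀A))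
      set u' : V → ℝ := fun x => max (u x - t) 0 with hu'
      have hu'nonneg : ∀ x, 0 ≤ u' x := fun x => le_max_right _ _
      have hu'A : ∀ x ∈ A, u' x = u x - t := fun x hx =>
        max_eq_left (by linarith [htle x hx])
      have hu'nA : ∀ x, x ∉ A → u' x = 0 := fun x hx =>
        max_eq_right (by linarith [huzero x hx, htpos])
      set A' : Finset V := Finset.univ.filter (fun x => u' x ≠ 0) with hA'
      have hA'sub : A' ⊆ A.erase x₀ := by
        intro x hx
        simp only [hA', Finset.mem_filter, Finset.mem_univ, true_and] at hx
        have hxA : x ∈ A := by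
          by_contra h; exact hx (hu'nA x h)
        refine Finset.mem_erase.2 ⟨?_, hxA⟩
        intro h; subst h
        exact hx (by rw [hu'A x hxA, hx₀t]; ring)
      have hcard' : A'.card < n := by
        calc A'.card ≤ (A.erase x₀).card := Finset.card_le_card hA'sub
        _ < A.card := Finset.card_erase_lt_of_mem hx₀A
        _ = n := hn
      have hih := ih A'.card hcard' u' rfl hu'nonneg (by
        show 2 * A'.card ≤ Fintype.card V
        have h1 : A'.card ≤ A.card := le_trans (Finset.card_le_card hA'sub)
          (Finset.card_le_card (Finset.erase_subset _ _))
        omega)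
      -- sum identity
      have hsum : ∑ x, u x = (∑ x, u' x) + t * A.card := by
        have : ∀ x, u x = u' x + (if x ∈ A then t else 0) := by
          intro x
          by_cases hx : x ∈ A
          · rw [hu'A x hx, if_pos hx]; ring
          · rw [hu'nA x hx, if_neg hx, huzero x hx]; ring
        rw [Finset.sum_congr rfl (fun x _ => this x), Finset.sum_add_distrib,
          Finset.sum_ite_mem, Finset.univ_inter, Finset.sum_const, nsmul_eq_mul]
        ring
      -- boundary counting
      set B : Finset V := {x : V | x ∉ A ∧ ∃ a ∈ A, G.Adj x a}.toFinset with hB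
      have hmemB : ∀ x, x ∈ B ↔ (x ∉ A ∧ ∃ a ∈ A, G.Adj x a) := by
        intro x; rw [hB, Set.mem_toFinset]; rfl
      have hBcard : c * A.card ≤ (B.card : ℝ) := by
        have := hexp A hsupp
        rwa [Set.ncard_eq_toFinset_card'] at this
      set P1 : Finset (V × V) := (adjP G).filter (fun p => p.1 ∈ A ∧ p.2 ∉ A) with hP1
      set P2 : Finset (V × V) := (adjP G).filter (fun p => p.1 ∉ A ∧ p.2 ∈ A) with hP2
      have choice_spec : ∀ b ∈ B, (if h : ∃ a, a ∈ A ∧ G.Adj b a then h.choose else b) ∈ A ∧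
          G.Adj b (if h : ∃ a, a ∈ A ∧ G.Adj b a then h.choose else b) := by
        intro b hb
        obtain ⟨-, a, ha, hadj⟩ := (hmemB b).1 hb
        have hex : ∃ a, a ∈ A ∧ G.Adj b a := ⟨a, ha, hadj⟩
        rw [dif_pos hex]
        exact hex.choose_spec
      have hBP2 : B.card ≤ P2.card := by
        apply Finset.card_le_card_of_injOn
          (fun b => (b, if h : ∃ a, a ∈ A ∧ G.Adj b a then h.choose else b))
        · intro b hb
          obtain ⟨h1, h2⟩ := choice_spec b hb
          simp only [Finset.mem_coe, hP2, adjP, Finset.mem_filter, Finset.mem_univ, true_and]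
          exact ⟨h2, ((hmemB b).1 hb).1, h1⟩
        · intro b _ b' _ h
          exact congrArg Prod.fst h
      have hBP1 : B.card ≤ P1.card := by
        apply Finset.card_le_card_of_injOn
          (fun b => ((if h : ∃ a, a ∈ A ∧ G.Adj b a then h.choose else b), b))
        · intro b hb
          obtain ⟨h1, h2⟩ := choice_spec b hb
          simp only [Finset.mem_coe, hP1, adjP, Finset.mem_filter, Finset.mem_univ, true_and]
          exact ⟨h2.symm, h1, ((hmemB b).1 hb).1⟩
        · intro b _ b' _ h
          exact congrArg Prod.snd h
      set Q : Finset (V × V) := (adjP G).filter (fun p => ¬((p.1 ∈ A) ↔ (p.2 ∈ A))) with hQ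
      have hP1Q : P1 ⊆ Q := by
        intro p hp
        simp only [hP1, Finset.mem_filter] at hp
        simp only [hQ, Finset.mem_filter]
        exact ⟨hp.1, by tauto⟩
      have hP2Q : P2 ⊆ Q := by
        intro p hp
        simp only [hP2, Finset.mem_filter] at hp
        simp only [hQ, Finset.mem_filter]
        exact ⟨hp.1, by tauto⟩
      have hdisj : Disjoint P1 P2 := by
        rw [Finset.disjoint_left]
        intro p hp1 hp2
        simp only [hP1, Finset.mem_filter] at hp1
        simp only [hP2, Finset.mem_filter] at hp2
        exact hp2.2.1 hp1.2.1
      have hQcard : 2 * (B.card : ℝ) ≤ (Q.card : ℝ) := by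
        have hPPQ : P1.card + P2.card ≤ Q.card := by
          rw [← Finset.card_union_of_disjoint hdisj]
          exact Finset.card_le_card (Finset.union_subset hP1Q hP2Q)
        have h2B : 2 * B.card ≤ Q.card := by omega
        exact_mod_cast h2B
      -- pointwise edge inequality
      have hedge : ∀ p ∈ adjP G,
          |u' p.1 - u' p.2| + (if (p.1 ∈ A) ↔ (p.2 ∈ A) then 0 else t) ≤ |u p.1 - u p.2| := by
        intro p _
        by_cases h1 : p.1 ∈ A <;> by_cases h2 : p.2 ∈ A
        · rw [hu'A _ h1, hu'A _ h2, if_pos (by tauto)]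
          have : u p.1 - t - (u p.2 - t) = u p.1 - u p.2 := by ring
          rw [this]; linarith
        · rw [hu'A _ h1, hu'nA _ h2, huzero _ h2, if_neg (by tauto)]
          have e1 : u p.1 - t ≥ 0 := by linarith [htle _ h1]
          rw [sub_zero, sub_zero, abs_of_nonneg e1, abs_of_nonneg (by linarith : (0:ℝ) ≤ u p.1)]
          linarith
        · rw [hu'nA _ h1, hu'A _ h2, huzero _ h1, if_neg (by tauto)]
          have e1 : u p.2 - t ≥ 0 := by linarith [htle _ h2]
          rw [zero_sub, zero_sub, abs_neg, abs_neg, abs_of_nonneg e1,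
            abs_of_nonneg (by linarith : (0:ℝ) ≤ u p.2)]
          linarith
        · rw [hu'nA _ h1, hu'nA _ h2, huzero _ h1, huzero _ h2, if_pos (by tauto)]
          simp
      have hsum_edge : (∑ p ∈ adjP G, |u' p.1 - u' p.2|) + t * Q.card
          ≤ ∑ p ∈ adjP G, |u p.1 - u p.2| := by
        have h1 : ∑ p ∈ adjP G, ((if (p.1 ∈ A) ↔ (p.2 ∈ A) then (0:ℝ) else t)) = t * Q.card := by
          rw [Finset.sum_ite, Finset.sum_const, Finset.sum_const, hQ]
          simp [mul_comm]
        calc (∑ p ∈ adjP G, |u' p.1 - u' p.2|) + t * Q.card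
            = ∑ p ∈ adjP G, (|u' p.1 - u' p.2| + (if (p.1 ∈ A) ↔ (p.2 ∈ A) then 0 else t)) := by
              rw [Finset.sum_add_distrib, h1]
          _ ≤ ∑ p ∈ adjP G, |u p.1 - u p.2| := Finset.sum_le_sum hedge
      -- conclusion
      have hQt : 2 * c * (t * A.card) ≤ t * Q.card := by
        have : 2 * (c * A.card) ≤ (Q.card : ℝ) := le_trans (by linarith) hQcard
        nlinarith
      calc 2 * c * ∑ x, u x = 2 * c * ∑ x, u' x + 2 * c * (t * A.card) := by
            rw [hsum]; ring
        _ ≤ (∑ p ∈ adjP G, |u' p.1 - u' p.2|) + t * Q.card := by linarith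
        _ ≤ ∑ p ∈ adjP G, |u p.1 - u p.2| := hsum_edge

private lemma cheeger (G : SimpleGraph V) [DecidableRel G.Adj]
    {c : ℝ} (hc : 0 < c) (d : ℕ) (hreg : ∀ v, G.degree v = d)
    (hexp : ∀ A : Finset V, 2 * A.card ≤ Fintype.card V →
      c * A.card ≤ ({x : V | x ∉ A ∧ ∃ a ∈ A, G.Adj x a}.ncard : ℝ))
    (h : V → ℝ) (hh : ∀ x, 0 ≤ h x)
    (hsupp : 2 * (Finset.univ.filter (fun x => h x ≠ 0)).card ≤ Fintype.card V) :
    c^2 * ∑ x, (h x)^2 ≤ d * ∑ p ∈ adjP G, (h p.1 - h p.2)^2 := by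
  classical
  set u : V → ℝ := fun x => (h x)^2 with hu
  have hufil : (Finset.univ.filter (fun x => u x ≠ 0)) = (Finset.univ.filter (fun x => h x ≠ 0)) := by
    apply Finset.filter_congr
    intro x _
    simp [hu, pow_eq_zero_iff]
  have hco := coarea G hc hexp _ u rfl (fun x => sq_nonneg _) (by rw [hufil]; exact hsupp)
  -- rewrite |u1 - u2| = |h1 - h2| * (h1 + h2)
  have habs : ∀ p ∈ adjP G, |u p.1 - u p.2| = |h p.1 - h p.2| * (h p.1 + h p.2) := by
    intro p _
    have : u p.1 - u p.2 = (h p.1 - h p.2) * (h p.1 + h p.2) := by rw [hu]; ring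
    rw [this, abs_mul]
    congr 1
    exact abs_of_nonneg (by linarith [hh p.1, hh p.2])
  rw [Finset.sum_congr rfl habs] at hco
  have hCS := Finset.sum_mul_sq_le_sq_mul_sq (adjP G)
    (fun p => |h p.1 - h p.2|) (fun p => h p.1 + h p.2)
  simp only [sq_abs] at hCS
  have hS2 : ∑ p ∈ adjP G, (h p.1 + h p.2)^2 ≤ 4 * d * ∑ x, (h x)^2 := by
    have hpt : ∀ p ∈ adjP G, (h p.1 + h p.2)^2 ≤ 2 * (h p.1)^2 + 2 * (h p.2)^2 := by
      intro p _; nlinarith [sq_nonneg (h p.1 - h p.2)]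
    calc ∑ p ∈ adjP G, (h p.1 + h p.2)^2
        ≤ ∑ p ∈ adjP G, (2 * (h p.1)^2 + 2 * (h p.2)^2) := Finset.sum_le_sum hpt
      _ = 2 * (∑ p ∈ adjP G, (h p.1)^2) + 2 * (∑ p ∈ adjP G, (h p.2)^2) := by
          rw [Finset.sum_add_distrib, Finset.mul_sum, Finset.mul_sum]
      _ = 4 * d * ∑ x, (h x)^2 := by
          rw [sum_fst G (fun x => (h x)^2), sum_snd G (fun x => (h x)^2)]
          simp_rw [hreg]
          rw [← Finset.mul_sum]
          ring
  set S := ∑ x, (h x)^2 with hS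
  set E := ∑ p ∈ adjP G, (h p.1 - h p.2)^2 with hE
  have hSnn : 0 ≤ S := Finset.sum_nonneg fun x _ => sq_nonneg _
  have hEnn : 0 ≤ E := Finset.sum_nonneg fun p _ => sq_nonneg _
  rcases eq_or_lt_of_le hSnn with hS0 | hSpos
  · rw [← hS0, mul_zero]
    exact mul_nonneg (by positivity) hEnn
  · -- (2c S)^2 ≤ E * (4 d S)
    have key : (2 * c * S)^2 ≤ E * (4 * d * S) := by
      calc (2 * c * S)^2 ≤ (∑ p ∈ adjP G, |h p.1 - h p.2| * (h p.1 + h p.2))^2 := by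
            apply sq_le_sq'
            · nlinarith
            · exact hco
        _ ≤ E * ∑ p ∈ adjP G, (h p.1 + h p.2)^2 := hCS
        _ ≤ E * (4 * d * S) := by
            apply mul_le_mul_of_nonneg_left _ hEnn
            exact hS2
    nlinarith

private lemma exists_median [Nonempty V] (g : V → ℝ) :
    ∃ m : ℝ, 2 * (Finset.univ.filter (fun x => m < g x)).card ≤ Fintype.card V ∧
      2 * (Finset.univ.filter (fun x => g x < m)).card ≤ Fintype.card V := by
  classical
  have himne : (Finset.univ.image g).Nonempty := Finset.univ_nonempty.image g
  set T : Finset ℝ := (Finset.univ.image g).filter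
    (fun t => 2 * (Finset.univ.filter (fun x => t < g x)).card ≤ Fintype.card V) with hT
  have hTne : T.Nonempty := by
    refine ⟨(Finset.univ.image g).max' himne, ?_⟩
    rw [hT, Finset.mem_filter]
    refine ⟨Finset.max'_mem _ _, ?_⟩
    have : (Finset.univ.filter (fun x => (Finset.univ.image g).max' himne < g x)) = ∅ := by
      apply Finset.filter_eq_empty_iff.2
      intro x _
      exact not_lt.2 (Finset.le_max' _ _ (Finset.mem_image_of_mem g (Finset.mem_univ x)))
    have h0 : (Finset.univ.filter (fun x => (Finset.univ.image g).max' himne < g x)).card = 0 :=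
      Finset.card_eq_zero.2 this
    omega
  set m : ℝ := T.min' hTne with hm
  have hm1 : 2 * (Finset.univ.filter (fun x => m < g x)).card ≤ Fintype.card V := by
    exact (Finset.mem_filter.1 (Finset.min'_mem T hTne)).2
  refine ⟨m, hm1, ?_⟩
  by_cases hlt : (Finset.univ.filter (fun x => g x < m)) = ∅
  · rw [hlt]; simp [Fintype.card_pos]
  · have hltne : (Finset.univ.filter (fun x => g x < m)).Nonempty :=
      Finset.nonempty_iff_ne_empty.2 hlt
    have him2 : ((Finset.univ.filter (fun x => g x < m)).image g).Nonempty := hltne.image g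
    set m' : ℝ := ((Finset.univ.filter (fun x => g x < m)).image g).max' him2 with hm'
    obtain ⟨x', hx', hx'g⟩ := Finset.mem_image.1 (Finset.max'_mem _ him2)
    have hm'lt : m' < m := by
      rw [hm', ← hx'g]
      exact (Finset.mem_filter.1 hx').2
    have hm'img : m' ∈ Finset.univ.image g := by
      rw [hm', ← hx'g]; exact Finset.mem_image_of_mem g (Finset.mem_univ x')
    have hm'notT : m' ∉ T := by
      intro hmem
      exact absurd (Finset.min'_le T m' hmem) (not_le.2 hm'lt)
    have hm'big : Fintype.card V < 2 * (Finset.univ.filter (fun x => m' < g x)).card := by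
      by_contra hcon
      exact hm'notT (by rw [hT, Finset.mem_filter]; exact ⟨hm'img, by omega⟩)
    have hsub : (Finset.univ.filter (fun x => m' < g x)) ⊆
        (Finset.univ.filter (fun x => ¬(g x < m))) := by
      intro x hx
      rw [Finset.mem_filter] at hx ⊢
      refine ⟨Finset.mem_univ x, ?_⟩
      intro hgx
      have : g x ≤ m' := Finset.le_max' _ _ (Finset.mem_image_of_mem g
        (Finset.mem_filter.2 ⟨Finset.mem_univ x, hgx⟩))
      linarith [hx.2]
    have hcards := Finset.card_filter_add_card_filter_not
      (s := (Finset.univ : Finset V)) (p := fun x => g x < m)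
    rw [Finset.card_univ] at hcards
    have := Finset.card_le_card hsub
    omega

private lemma poincare_real [Nonempty V] (G : SimpleGraph V) [DecidableRel G.Adj]
    {c : ℝ} (hc : 0 < c) (d : ℕ) (hreg : ∀ v, G.degree v = d)
    (hexp : ∀ A : Finset V, 2 * A.card ≤ Fintype.card V →
      c * A.card ≤ ({x : V | x ∉ A ∧ ∃ a ∈ A, G.Adj x a}.ncard : ℝ))
    (g : V → ℝ) :
    c^2 * ∑ x, ∑ y, (g x - g y)^2 ≤
      2 * d * (Fintype.card V) * ∑ p ∈ adjP G, (g p.1 - g p.2)^2 := by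
  classical
  obtain ⟨m, hm1, hm2⟩ := exists_median g
  set hp : V → ℝ := fun x => max (g x - m) 0 with hhp
  set hq : V → ℝ := fun x => max (m - g x) 0 with hhq
  have hpnn : ∀ x, 0 ≤ hp x := fun x => le_max_right _ _
  have hqnn : ∀ x, 0 ≤ hq x := fun x => le_max_right _ _
  have hpsupp : (Finset.univ.filter (fun x => hp x ≠ 0)) =
      (Finset.univ.filter (fun x => m < g x)) := by
    apply Finset.filter_congr; intro x _
    simp only [ne_eq]
    constructor
    · intro hne
      by_contra hle
      push_neg at hle
      exact hne (max_eq_right (by linarith : g x - m ≤ 0))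
    · intro hlt hmax
      have h2 : max (g x - m) 0 = 0 := hmax
      have h1 := le_max_left (g x - m) 0
      rw [h2] at h1
      linarith
  have hqsupp : (Finset.univ.filter (fun x => hq x ≠ 0)) =
      (Finset.univ.filter (fun x => g x < m)) := by
    apply Finset.filter_congr; intro x _
    simp only [ne_eq]
    constructor
    · intro hne
      by_contra hle
      push_neg at hle
      exact hne (max_eq_right (by linarith : m - g x ≤ 0))
    · intro hlt hmax
      have h2 : max (m - g x) 0 = 0 := hmax
      have h1 := le_max_left (m - g x) 0
      rw [h2] at h1
      linarith
  have hcheegp := cheeger G hc d hreg hexp hp hpnn (by rw [hpsupp]; exact hm1)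
  have hcheegq := cheeger G hc d hreg hexp hq hqnn (by rw [hqsupp]; exact hm2)
  set N : ℕ := Fintype.card V with hN
  -- step 1 : double sum bound
  have hsq : ∀ x, (g x - m)^2 = (hp x)^2 + (hq x)^2 := by
    intro x
    rcases le_total (g x) m with hle | hle
    · rw [hhp, hhq]
      simp only [max_eq_right (by linarith : g x - m ≤ 0), max_eq_left (by linarith : 0 ≤ m - g x)]
      ring_nf
    · rw [hhp, hhq]
      simp only [max_eq_left (by linarith : 0 ≤ g x - m), max_eq_right (by linarith : m - g x ≤ 0)]
      ring_nf
  have step1 : ∑ x, ∑ y, (g x - g y)^2 ≤ 2 * N * ((∑ x, (hp x)^2) + ∑ x, (hq x)^2) := by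
    set a : V → ℝ := fun x => g x - m with ha
    set S1 : ℝ := ∑ x, a x with hS1
    set S2 : ℝ := ∑ x, (a x)^2 with hS2
    have inner : ∀ x, ∑ y, (g x - g y)^2 = N * (a x)^2 + S2 - 2 * (a x * S1) := by
      intro x
      have e1 : ∀ y, (g x - g y)^2 = ((a x)^2 + (a y)^2) - 2 * (a x * a y) := by
        intro y; simp only [ha]; ring
      rw [Finset.sum_congr rfl fun y _ => e1 y, Finset.sum_sub_distrib,
        Finset.sum_add_distrib, Finset.sum_const, Finset.card_univ,
        ← Finset.mul_sum, ← Finset.mul_sum, nsmul_eq_mul, hS1, hS2]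
    have expand : ∑ x, ∑ y, (g x - g y)^2 = 2 * N * S2 - 2 * S1^2 := by
      rw [Finset.sum_congr rfl fun x _ => inner x, Finset.sum_sub_distrib,
        Finset.sum_add_distrib, Finset.sum_const, Finset.card_univ,
        ← Finset.mul_sum, ← Finset.mul_sum, ← Finset.sum_mul, nsmul_eq_mul, ← hS1, ← hS2]
      ring
    rw [expand]
    have hsplit : S2 = (∑ x, (hp x)^2) + ∑ x, (hq x)^2 := by
      rw [hS2, ← Finset.sum_add_distrib]
      exact Finset.sum_congr rfl fun x _ => hsq x
    rw [hsplit]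
    nlinarith [sq_nonneg S1]
  -- step 3 : edge comparison
  have step3 : (∑ p ∈ adjP G, (hp p.1 - hp p.2)^2) + (∑ p ∈ adjP G, (hq p.1 - hq p.2)^2)
      ≤ ∑ p ∈ adjP G, (g p.1 - g p.2)^2 := by
    rw [← Finset.sum_add_distrib]
    apply Finset.sum_le_sum
    intro p _
    have key : ∀ a b : ℝ, (max a 0 - max b 0)^2 + (max (-a) 0 - max (-b) 0)^2 ≤ (a - b)^2 := by
      intro a b
      rcases le_total a 0 with ha | ha <;> rcases le_total b 0 with hb | hb
      · rw [max_eq_right ha, max_eq_right hb, max_eq_left (by linarith), max_eq_left (by linarith)]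
        nlinarith
      · rw [max_eq_right ha, max_eq_left hb, max_eq_left (by linarith), max_eq_right (by linarith)]
        nlinarith [mul_nonneg hb (neg_nonneg.2 ha)]
      · rw [max_eq_left ha, max_eq_right hb, max_eq_right (by linarith), max_eq_left (by linarith)]
        nlinarith [mul_nonneg ha (neg_nonneg.2 hb)]
      · rw [max_eq_left ha, max_eq_left hb, max_eq_right (by linarith), max_eq_right (by linarith)]
        nlinarith
    have := key (g p.1 - m) (g p.2 - m)
    simp only [neg_sub] at this
    have e1 : g p.1 - m - (g p.2 - m) = g p.1 - g p.2 := by ring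
    rw [e1] at this
    simpa [hhp, hhq] using this
  -- combine
  have hNnn : (0:ℝ) ≤ (N:ℝ) := Nat.cast_nonneg N
  have hEp : 0 ≤ ∑ p ∈ adjP G, (hp p.1 - hp p.2)^2 := Finset.sum_nonneg fun p _ => sq_nonneg _
  have hEq : 0 ≤ ∑ p ∈ adjP G, (hq p.1 - hq p.2)^2 := Finset.sum_nonneg fun p _ => sq_nonneg _
  calc c^2 * ∑ x, ∑ y, (g x - g y)^2
      ≤ c^2 * (2 * N * ((∑ x, (hp x)^2) + ∑ x, (hq x)^2)) := by
        apply mul_le_mul_of_nonneg_left step1 (sq_nonneg c)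
    _ = 2 * N * (c^2 * ∑ x, (hp x)^2 + c^2 * ∑ x, (hq x)^2) := by ring
    _ ≤ 2 * N * (d * (∑ p ∈ adjP G, (hp p.1 - hp p.2)^2) + d * (∑ p ∈ adjP G, (hq p.1 - hq p.2)^2)) := by
        apply mul_le_mul_of_nonneg_left _ (by positivity)
        linarith
    _ = 2 * d * N * ((∑ p ∈ adjP G, (hp p.1 - hp p.2)^2) + (∑ p ∈ adjP G, (hq p.1 - hq p.2)^2)) := by
        ring
    _ ≤ 2 * d * N * (∑ p ∈ adjP G, (g p.1 - g p.2)^2) := by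
        apply mul_le_mul_of_nonneg_left step3 (by positivity)

private lemma poincare_lp [Nonempty V] (G : SimpleGraph V) [DecidableRel G.Adj]
    {c : ℝ} (hc : 0 < c) (d : ℕ) (hreg : ∀ v, G.degree v = d)
    (hexp : ∀ A : Finset V, 2 * A.card ≤ Fintype.card V →
      c * A.card ≤ ({x : V | x ∉ A ∧ ∃ a ∈ A, G.Adj x a}.ncard : ℝ))
    (f : V → lp (fun _ : ℕ => ℝ) 2) :
    c^2 * ∑ x, ∑ y, ‖f x - f y‖^2 ≤
      2 * d * (Fintype.card V) * ∑ p ∈ adjP G, ‖f p.1 - f p.2‖^2 := by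
  classical
  have h2 : (0:ℝ) < (2 : ENNReal).toReal := by norm_num
  have e2 : ((2:ENNReal)).toReal = (2:ℝ) := by norm_num
  have hrp : ∀ y : ℝ, y ^ (2:ℝ) = y ^ (2:ℕ) := fun y => by
    rw [show (2:ℝ) = ((2:ℕ):ℝ) by norm_num, Real.rpow_natCast]
  have hnorm : ∀ v : lp (fun _ : ℕ => ℝ) 2, ‖v‖^2 = ∑' k, ((v : ∀ _ : ℕ, ℝ) k)^2 := by
    intro v
    calc ‖v‖^2 = ‖v‖ ^ (2:ℝ) := (hrp _).symm
      _ = ∑' k, ‖(v : ∀ _ : ℕ, ℝ) k‖ ^ (2:ℝ) := by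
          rw [← e2]; exact lp.norm_rpow_eq_tsum h2 v
      _ = ∑' k, ((v : ∀ _ : ℕ, ℝ) k)^2 := by
          exact tsum_congr fun k => by rw [hrp, Real.norm_eq_abs, sq_abs]
  have hsummable : ∀ v : lp (fun _ : ℕ => ℝ) 2, Summable (fun k => ((v : ∀ _ : ℕ, ℝ) k)^2) := by
    intro v
    have hs := (lp.memℓp v).summable h2
    apply hs.congr
    intro k
    rw [e2, hrp, Real.norm_eq_abs, sq_abs]
  set g : ℕ → V → ℝ := fun k x => (f x : ∀ _ : ℕ, ℝ) k with hg
  have hdiff : ∀ (x y : V) (k : ℕ), ((f x - f y : lp _ 2) : ∀ _ : ℕ, ℝ) k = g k x - g k y := by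
    intro x y k
    rw [lp.coeFn_sub]
    rfl
  have hsumpair : ∀ (s : Finset (V × V)),
      Summable (fun k => ∑ p ∈ s, (g k p.1 - g k p.2)^2) := by
    intro s
    apply summable_sum
    intro p _
    exact (hsummable (f p.1 - f p.2)).congr (fun k => by rw [hdiff])
  have hL : ∑ x, ∑ y, ‖f x - f y‖^2
      = ∑' k, ∑ p ∈ Finset.univ ×ˢ Finset.univ, (g k p.1 - g k p.2)^2 := by
    rw [← Finset.sum_product' Finset.univ Finset.univ (fun x y => ‖f x - f y‖^2)]
    rw [Finset.sum_congr rfl (fun p _ => by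
      rw [hnorm (f p.1 - f p.2)]
      try exact tsum_congr fun k => by rw [hdiff])]
    exact (Summable.tsum_finsetSum (fun p _ => (hsummable (f p.1 - f p.2)).congr
      (fun k => by rw [hdiff]))).symm
  have hR : ∑ p ∈ adjP G, ‖f p.1 - f p.2‖^2
      = ∑' k, ∑ p ∈ adjP G, (g k p.1 - g k p.2)^2 := by
    rw [Finset.sum_congr rfl (fun p _ => by
      rw [hnorm (f p.1 - f p.2)]
      try exact tsum_congr fun k => by rw [hdiff])]
    exact (Summable.tsum_finsetSum (fun p _ => (hsummable (f p.1 - f p.2)).congr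
      (fun k => by rw [hdiff]))).symm
  rw [hL, hR, ← tsum_mul_left, ← tsum_mul_left]
  apply Summable.tsum_le_tsum
  · intro k
    have := poincare_real G hc d hreg hexp (g k)
    rw [← Finset.sum_product' Finset.univ Finset.univ (fun x y => (g k x - g k y)^2)] at this
    exact this
  · exact (hsumpair _).mul_left _
  · exact (hsumpair _).mul_left _

private lemma ball_card (G : SimpleGraph V) [DecidableRel G.Adj]
    (hconn : G.Connected) (d : ℕ) (hreg : ∀ v, G.degree v = d) (x : V) :
    ∀ R : ℕ, (Finset.univ.filter (fun y => G.dist x y ≤ R)).card ≤ (d+1)^R := by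
  intro R
  induction R with
  | zero =>
    have hsub : (Finset.univ.filter (fun y => G.dist x y ≤ 0)) ⊆ {x} := by
      intro y hy
      rw [Finset.mem_filter] at hy
      have : G.dist x y = 0 := Nat.le_zero.1 hy.2
      rw [Finset.mem_singleton]
      exact (hconn.dist_eq_zero_iff.1 this).symm
    simpa using Finset.card_le_card hsub
  | succ R ihR =>
    have hsub : (Finset.univ.filter (fun y => G.dist x y ≤ R + 1)) ⊆
        (Finset.univ.filter (fun y => G.dist x y ≤ R)).biUnion
          (fun y => insert y (G.neighborFinset y)) := by
      intro z hz
      rw [Finset.mem_filter] at hz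
      rw [Finset.mem_biUnion]
      by_cases h : G.dist x z ≤ R
      · exact ⟨z, Finset.mem_filter.2 ⟨Finset.mem_univ z, h⟩, Finset.mem_insert_self z _⟩
      · have hdz : G.dist x z = R + 1 := le_antisymm hz.2 (by omega)
        have hne : G.dist z x ≠ 0 := by
          rw [SimpleGraph.dist_comm]; omega
        obtain ⟨w, hw⟩ := SimpleGraph.exists_walk_of_dist_ne_zero hne
        cases w with
        | nil =>
          exfalso
          rw [SimpleGraph.dist_comm] at hw
          simp only [SimpleGraph.Walk.length_nil] at hw
          omega
        | @cons _ y _ hadj q =>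
          refine ⟨y, Finset.mem_filter.2 ⟨Finset.mem_univ y, ?_⟩, ?_⟩
          · have hql : q.length + 1 = G.dist z x := by
              simpa using hw
            have : G.dist y x ≤ q.length := SimpleGraph.dist_le q
            rw [SimpleGraph.dist_comm] at hdz
            rw [SimpleGraph.dist_comm (u := x)]
            omega
          · exact Finset.mem_insert.2 (Or.inr ((SimpleGraph.mem_neighborFinset _ _ _).2 hadj.symm))
    calc (Finset.univ.filter (fun y => G.dist x y ≤ R + 1)).card
        ≤ ((Finset.univ.filter (fun y => G.dist x y ≤ R)).biUnion
            (fun y => insert y (G.neighborFinset y))).card := Finset.card_le_card hsub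
      _ ≤ ∑ y ∈ Finset.univ.filter (fun y => G.dist x y ≤ R),
            (insert y (G.neighborFinset y)).card := Finset.card_biUnion_le
      _ ≤ ∑ y ∈ Finset.univ.filter (fun y => G.dist x y ≤ R), (d + 1) := by
          apply Finset.sum_le_sum
          intro y _
          calc (insert y (G.neighborFinset y)).card ≤ (G.neighborFinset y).card + 1 :=
                Finset.card_insert_le _ _
            _ = d + 1 := by rw [← SimpleGraph.degree, hreg y]
      _ = (Finset.univ.filter (fun y => G.dist x y ≤ R)).card * (d + 1) := by
          rw [Finset.sum_const, smul_eq_mul]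
      _ ≤ (d+1)^R * (d+1) := Nat.mul_le_mul_right _ ihR
      _ = (d+1)^(R+1) := by ring

/-- An expander `{X_n}` with conductance `c > 0` and degree `d` admits no
uniform embedding into `ℓ²`: there are no functions `ρ₁, ρ₂ : ℝ₊ → ℝ₊` with
`ρ₁(t) → ∞` and maps `f_n : X_n → ℓ²` with
`ρ₁(d(x,y)) ≤ ‖f_n(x) − f_n(y)‖ ≤ ρ₂(d(x,y))` for all `n` and all vertices `x, y`. -/
theorem stmt11
    (V : ℕ → Type) [∀ n, Fintype (V n)] [∀ n, DecidableEq (V n)]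
    (G : ∀ n, SimpleGraph (V n)) [∀ n, DecidableRel (G n).Adj]
    (c : ℝ) (hc : 0 < c) (d : ℕ)
    (hconn : ∀ n, (G n).Connected)
    (hreg : ∀ n, ∀ v : V n, (G n).degree v = d)
    (hcard : Filter.Tendsto (fun n => Fintype.card (V n)) Filter.atTop Filter.atTop)
    (hexp : ∀ n, ∀ A : Finset (V n), 2 * A.card ≤ Fintype.card (V n) →
      c * A.card ≤ ({x : V n | x ∉ A ∧ ∃ a ∈ A, (G n).Adj x a}.ncard : ℝ)) :
    ¬ ∃ (ρ₁ ρ₂ : ℝ → ℝ) (f : ∀ n, V n → lp (fun _ : ℕ => ℝ) 2),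
        (∀ t, 0 ≤ t → 0 ≤ ρ₁ t) ∧ (∀ t, 0 ≤ t → 0 ≤ ρ₂ t) ∧
        Filter.Tendsto ρ₁ Filter.atTop Filter.atTop ∧
        ∀ n, ∀ x y : V n,
          ρ₁ ((G n).dist x y) ≤ ‖f n x - f n y‖ ∧
          ‖f n x - f n y‖ ≤ ρ₂ ((G n).dist x y) := by
  rintro ⟨ρ₁, ρ₂, f, hρ₁, hρ₂, htend, hbound⟩
  classical
  have hρ₂1 : 0 ≤ ρ₂ 1 := hρ₂ 1 (by norm_num)
  set Q : ℝ := 4 * (d:ℝ)^2 * (ρ₂ 1)^2 with hQdef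
  have hQnn : 0 ≤ Q := by positivity
  set M : ℝ := Real.sqrt Q / c + 1 with hM
  have hMnn : 0 ≤ M := by positivity
  obtain ⟨r, hr⟩ := Filter.eventually_atTop.1 (Filter.tendsto_atTop.1 htend M)
  set R : ℕ := ⌈r⌉₊ with hR
  obtain ⟨n, hn⟩ := (hcard.eventually_ge_atTop (2 * (d+1)^R)).exists
  set N : ℕ := Fintype.card (V n) with hN
  have hdR1 : 1 ≤ (d+1)^R := Nat.one_le_pow _ _ (by omega)
  have hNpos : 0 < N := by omega
  haveI : Nonempty (V n) := Fintype.card_pos_iff.1 hNpos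
  have hpoin := poincare_lp (G n) hc d (hreg n) (hexp n) (f n)
  -- RHS bound
  have hadjcard : ((adjP (G n)).card : ℝ) = (d : ℝ) * N := by
    have h1 : ∑ p ∈ adjP (G n), (1:ℝ) = ∑ x, ((G n).degree x : ℝ) * 1 :=
      sum_fst (G n) (fun _ => 1)
    have h2 : ∑ p ∈ adjP (G n), (1:ℝ) = ((adjP (G n)).card : ℝ) := by
      rw [Finset.sum_const, nsmul_eq_mul, mul_one]
    have h3 : ∑ x : V n, ((G n).degree x : ℝ) * 1 = (d:ℝ) * N := by
      have he : ∀ x : V n, ((G n).degree x : ℝ) * 1 = (d:ℝ) := fun x => by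
        rw [hreg n x, mul_one]
      rw [Finset.sum_congr rfl (fun x _ => he x), Finset.sum_const, Finset.card_univ,
        nsmul_eq_mul, mul_comm]
    rw [← h2, h1, h3]
  have hRHS : ∑ p ∈ adjP (G n), ‖f n p.1 - f n p.2‖^2 ≤ ((d:ℝ) * N) * (ρ₂ 1)^2 := by
    calc ∑ p ∈ adjP (G n), ‖f n p.1 - f n p.2‖^2 ≤ ∑ _p ∈ adjP (G n), (ρ₂ 1)^2 := by
          apply Finset.sum_le_sum
          intro p hp
          have hadj : (G n).Adj p.1 p.2 := by
            rw [adjP, Finset.mem_filter] at hp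
            exact hp.2
          have hd1 : (G n).dist p.1 p.2 = 1 := SimpleGraph.dist_eq_one_iff_adj.2 hadj
          have hb := (hbound n p.1 p.2).2
          rw [hd1] at hb
          norm_num at hb
          exact pow_le_pow_left₀ (norm_nonneg _) hb 2
      _ = ((adjP (G n)).card : ℝ) * (ρ₂ 1)^2 := by rw [Finset.sum_const, nsmul_eq_mul]
      _ = ((d:ℝ) * N) * (ρ₂ 1)^2 := by rw [hadjcard]
  -- far pairs
  have hfar : ∀ x y : V n, ¬((G n).dist x y ≤ R) → M^2 ≤ ‖f n x - f n y‖^2 := by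
    intro x y hxy
    have hdist : (R:ℝ) ≤ ((G n).dist x y : ℝ) := by
      exact_mod_cast le_of_lt (not_le.1 hxy)
    have hrle : r ≤ ((G n).dist x y : ℝ) := le_trans (Nat.le_ceil r) hdist
    have hM1 := hr _ hrle
    have hb := (hbound n x y).1
    exact pow_le_pow_left₀ hMnn (le_trans hM1 hb) 2
  have hcount : ∀ x : V n,
      (N:ℝ) ≤ 2 * ((Finset.univ.filter (fun y => ¬((G n).dist x y ≤ R))).card : ℝ) := by
    intro x
    have hball := ball_card (G n) (hconn n) d (hreg n) x R
    have hsplit := Finset.card_filter_add_card_filter_not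
      (s := (Finset.univ : Finset (V n))) (p := fun y => (G n).dist x y ≤ R)
    rw [Finset.card_univ, ← hN] at hsplit
    have h2 : N ≤ 2 * (Finset.univ.filter (fun y => ¬((G n).dist x y ≤ R))).card := by omega
    exact_mod_cast h2
  have hLHS : (N:ℝ) * ((N:ℝ)/2 * M^2) ≤ ∑ x, ∑ y, ‖f n x - f n y‖^2 := by
    have hx : ∀ x : V n, (N:ℝ)/2 * M^2 ≤ ∑ y, ‖f n x - f n y‖^2 := by
      intro x
      have h1 : ∑ y, (if ¬((G n).dist x y ≤ R) then M^2 else 0) ≤ ∑ y, ‖f n x - f n y‖^2 := by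
        apply Finset.sum_le_sum
        intro y _
        by_cases hy : ¬((G n).dist x y ≤ R)
        · rw [if_pos hy]; exact hfar x y hy
        · rw [if_neg hy]; positivity
      have h2 : ∑ y, (if ¬((G n).dist x y ≤ R) then M^2 else 0)
          = ((Finset.univ.filter (fun y => ¬((G n).dist x y ≤ R))).card : ℝ) * M^2 := by
        rw [← Finset.sum_filter, Finset.sum_const, nsmul_eq_mul]
      have h3 := hcount x
      have h4 : (N:ℝ)/2 * M^2 ≤
          ((Finset.univ.filter (fun y => ¬((G n).dist x y ≤ R))).card : ℝ) * M^2 := by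
        nlinarith [h3, sq_nonneg M]
      calc (N:ℝ)/2 * M^2
          ≤ ((Finset.univ.filter (fun y => ¬((G n).dist x y ≤ R))).card : ℝ) * M^2 := h4
        _ = ∑ y, (if ¬((G n).dist x y ≤ R) then M^2 else 0) := h2.symm
        _ ≤ ∑ y, ‖f n x - f n y‖^2 := h1
    calc (N:ℝ) * ((N:ℝ)/2 * M^2) = ∑ _x : V n, ((N:ℝ)/2 * M^2) := by
          rw [Finset.sum_const, Finset.card_univ, ← hN, nsmul_eq_mul]
      _ ≤ ∑ x, ∑ y, ‖f n x - f n y‖^2 := Finset.sum_le_sum (fun x _ => hx x)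
  -- combine
  have hfinal : c^2 * ((N:ℝ) * ((N:ℝ)/2 * M^2)) ≤ 2*(d:ℝ)*N * (((d:ℝ)*N) * (ρ₂ 1)^2) := by
    calc c^2 * ((N:ℝ) * ((N:ℝ)/2 * M^2)) ≤ c^2 * ∑ x, ∑ y, ‖f n x - f n y‖^2 :=
          mul_le_mul_of_nonneg_left hLHS (sq_nonneg c)
      _ ≤ 2*(d:ℝ)*N * ∑ p ∈ adjP (G n), ‖f n p.1 - f n p.2‖^2 := hpoin
      _ ≤ 2*(d:ℝ)*N * (((d:ℝ)*N) * (ρ₂ 1)^2) := by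
          apply mul_le_mul_of_nonneg_left hRHS (by positivity)
  clear_value Q M
  have hNr : (0:ℝ) < N := by exact_mod_cast hNpos
  have hcM : c * M = Real.sqrt Q + c := by
    rw [hM]; field_simp
  have hsq : (Real.sqrt Q)^2 = Q := Real.sq_sqrt hQnn
  have hsq2 : c^2 * M^2 = Q + 2 * Real.sqrt Q * c + c^2 := by
    rw [show c^2 * M^2 = (c*M)^2 by ring, hcM, add_sq, hsq]
  have hgt : Q < c^2 * M^2 := by
    nlinarith [Real.sqrt_nonneg Q, hc, mul_nonneg (Real.sqrt_nonneg Q) hc.le]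
  have hNN : (0:ℝ) < (N:ℝ) * N := mul_pos hNr hNr
  have hkey : c^2*M^2*((N:ℝ)*N) ≤ Q*((N:ℝ)*N) := by
    rw [hQdef]; nlinarith [hfinal]
  have hlt := mul_lt_mul_of_pos_right hgt hNN
  linarith [hkey, hlt]
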